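/- Let L = P_σ · D be an n×n complex matrix with σ a permutation of Fin n and D diagonal, and for j ∈ Fin n let E_j denote the matrix with a single 1 in position (j,j) and zeros elsewhere. Then L · E_j · Lᴴ − (1/2)·(Lᴴ · L · E_j + E_j · Lᴴ · L) = |D_{j j}|² · (E_{σ(j)} − E_j). In particular, the rank-one diagonal projectors E_j are stationary eigenprojectors of the Lindblad dissipator generated by GPM Lindblad operators. -/

import Mathlib

open Matrix

/-- The permutation matrix of `σ`: entry `(j,k)` is `1` iff `j = σ k`. -/
def permMat (n : ℕ) (σ : Equiv.Perm (Fin n)) : Matrix (Fin n) (Fin n) ℂ :=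
  Matrix.of fun j k => if j = σ k then 1 else 0

theorem stmt3 (n : ℕ) (σ : Equiv.Perm (Fin n)) (d : Fin n → ℂ)
    (L : Matrix (Fin n) (Fin n) ℂ) (hL : L = permMat n σ * Matrix.diagonal d) (j : Fin n) :
    L * Matrix.single j j (1 : ℂ) * Lᴴ -
      (1 / 2 : ℂ) • (Lᴴ * L * Matrix.single j j (1 : ℂ) +
        Matrix.single j j (1 : ℂ) * (Lᴴ * L)) =
    ((‖d j‖) ^ 2 : ℂ) •
      (Matrix.single (σ j) (σ j) (1 : ℂ) - Matrix.single j j (1 : ℂ)) := by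
  have hL' : ∀ a b, L a b = if a = σ b then d b else 0 := by
    subst hL; intro a b
    simp [permMat, Matrix.mul_apply, Matrix.diagonal, ite_and]
  clear hL
  have habs : ((‖d j‖) ^ 2 : ℂ) = d j * (starRingEnd ℂ) (d j) := by
    rw [Complex.mul_conj]; norm_cast; rw [Complex.sq_norm]
  have hE : L * Matrix.single j j (1 : ℂ) =
      Matrix.single (σ j) j (d j) := by
    ext a b
    simp only [Matrix.mul_apply, Matrix.single, Matrix.of_apply, ite_and,
      mul_ite, mul_one, mul_zero, Finset.sum_ite_eq, Finset.mem_univ, if_true, hL']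
    split_ifs <;> subst_vars <;> simp_all
  have h1 : L * Matrix.single j j (1 : ℂ) * Lᴴ =
      Matrix.single (σ j) (σ j) (d j * (starRingEnd ℂ) (d j)) := by
    rw [hE]; clear hE; ext a b
    simp only [Matrix.mul_apply, Matrix.single, Matrix.of_apply, ite_and,
      Matrix.conjTranspose_apply, ite_mul, zero_mul, Finset.sum_ite_irrel,
      Finset.sum_ite_eq, Finset.mem_univ, if_true, Finset.sum_const_zero, hL',
      starRingEnd_apply]
    split_ifs <;> subst_vars <;> simp_all
  have h2 : Lᴴ * L = Matrix.diagonal (fun k => (starRingEnd ℂ) (d k) * d k) := by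
    ext a b
    simp only [Matrix.mul_apply, Matrix.conjTranspose_apply, Matrix.diagonal, Matrix.of_apply,
      hL']
    by_cases h : a = b
    · subst h; simp [apply_ite, Finset.sum_ite_eq']
    · rw [Finset.sum_eq_zero, if_neg h]
      intro x _
      by_cases hx : x = σ a <;> by_cases hx' : x = σ b <;>
        simp_all [EmbeddingLike.apply_eq_iff_eq]
  rw [h1, h2]; clear h1 h2 hE hL'
  ext a b
  simp only [Matrix.sub_apply, Matrix.smul_apply, Matrix.add_apply,
    Matrix.diagonal_mul, Matrix.mul_diagonal, Matrix.single, Matrix.of_apply,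
    ite_and, smul_eq_mul, habs, ite_mul, mul_ite, zero_mul, mul_zero, one_mul, mul_one]
  split_ifs <;> subst_vars <;> ring
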